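/- Let d ≥ 1 and x ∈ (0, π). Define θ₁ = arctan(sin x / (d - cos x)) and θ₂ = arctan(sin x / (3d - cos x)). Then 0 ≤ θ₁ + θ₂ ≤ π/2. -/

import Mathlib

open Real in
theorem stmt5 (d x : ℝ) (hd : 1 ≤ d) (hx0 : 0 < x) (hxπ : x < π) :
    0 ≤ arctan (sin x / (d - cos x)) + arctan (sin x / (3 * d - cos x)) ∧
    arctan (sin x / (d - cos x)) + arctan (sin x / (3 * d - cos x)) ≤ π / 2 := by
  have hs : 0 < sin x := Real.sin_pos_of_pos_of_lt_pi hx0 hxπ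
  have hsc := Real.sin_sq_add_cos_sq x
  have hc1 : cos x < 1 := by nlinarith
  have hc2 : -1 < cos x := by nlinarith
  have hd1 : (0:ℝ) < 1 - cos x := by linarith
  have hdd : (0:ℝ) < d - cos x := by linarith
  have hdd3 : (0:ℝ) < 3 * d - cos x := by linarith
  have h1p : (0:ℝ) < 1 + cos x := by linarith
  -- half-angle facts
  have hxc : 0 < cos (x / 2) := Real.cos_pos_of_mem_Ioo ⟨by linarith [Real.pi_pos], by linarith⟩
  have hxs : 0 < sin (x / 2) := Real.sin_pos_of_pos_of_lt_pi (by linarith) (by linarith [Real.pi_pos])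
  have hsin : sin x = 2 * sin (x / 2) * cos (x / 2) := by
    rw [← Real.sin_two_mul]; ring_nf
  have hcosp : 1 + cos x = 2 * cos (x / 2) ^ 2 := by
    have := Real.cos_sq (x / 2)
    rw [mul_div_cancel₀ x two_ne_zero] at this
    linarith
  have hcosm : 1 - cos x = 2 * sin (x / 2) ^ 2 := by
    have := Real.sin_sq_add_cos_sq (x / 2)
    nlinarith
  have htan2 : sin x / (1 + cos x) = tan (x / 2) := by
    rw [hsin, hcosp, Real.tan_eq_sin_div_cos]
    field_simp
  have htan1 : sin x / (1 - cos x) = tan (π / 2 - x / 2) := by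
    rw [Real.tan_pi_div_two_sub, hsin, hcosm, Real.tan_eq_sin_div_cos]
    rw [inv_div]
    field_simp
  have ht1 : arctan (sin x / (d - cos x)) ≤ π / 2 - x / 2 := by
    have hle : sin x / (d - cos x) ≤ sin x / (1 - cos x) :=
      div_le_div_of_nonneg_left hs.le hd1 (by linarith)
    calc arctan (sin x / (d - cos x)) ≤ arctan (sin x / (1 - cos x)) :=
          Real.arctan_strictMono.monotone hle
      _ = π / 2 - x / 2 := by
          rw [htan1, Real.arctan_tan (by linarith [Real.pi_pos]) (by linarith)]
  have ht2 : arctan (sin x / (3 * d - cos x)) ≤ x / 2 := by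
    have hle : sin x / (3 * d - cos x) ≤ sin x / (1 + cos x) :=
      div_le_div_of_nonneg_left hs.le h1p (by linarith)
    calc arctan (sin x / (3 * d - cos x)) ≤ arctan (sin x / (1 + cos x)) :=
          Real.arctan_strictMono.monotone hle
      _ = x / 2 := by
          rw [htan2, Real.arctan_tan (by linarith [Real.pi_pos]) (by linarith)]
  constructor
  · have h1 : 0 ≤ arctan (sin x / (d - cos x)) := by simpa using Real.arctan_strictMono.monotone (by positivity : (0:ℝ) ≤ _)
    have h2 : 0 ≤ arctan (sin x / (3 * d - cos x)) := by simpa using Real.arctan_strictMono.monotone (by positivity : (0:ℝ) ≤ _)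
    linarith
  · linarith
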